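/- Let G(s) = L + (s/(1−s))W on the complete graph with V vertices, where W is diagonal with unique smallest eigenvalue W_m = 0 and all other entries positive. Let φ(s) > 0 be the unit ground state of G(s). Then the amplitude φ(m)(s) at the marked vertex m is strictly increasing in s on [0,1): d(φ(m)²)/ds > 0. -/

import Mathlib

open Matrix

/-- The combinatorial Laplacian of the complete graph on `V` vertices:
`L = V·I − J`, where `J` is the all-ones matrix. -/
def cgL (V : ℕ) : Matrix (Fin V) (Fin V) ℝ :=
  (V : ℝ) • (1 : Matrix (Fin V) (Fin V) ℝ) - Matrix.of (fun _ _ => (1 : ℝ))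

/-- The rescaled interpolating Hamiltonian `G(s) = L + (s/(1−s))·W`. -/
noncomputable def cgG (V : ℕ) (W : Fin V → ℝ) (s : ℝ) : Matrix (Fin V) (Fin V) ℝ :=
  cgL V + (s / (1 - s)) • Matrix.diagonal W

lemma cgG_mulVec_apply {V : ℕ} (W : Fin V → ℝ) (s : ℝ) (x : Fin V → ℝ) (u : Fin V) :
    (cgG V W s).mulVec x u
      = (V : ℝ) * x u - (∑ v, x v) + (s / (1 - s)) * (W u * x u) := by
  simp only [cgG, cgL, Matrix.mulVec, dotProduct, Matrix.sub_apply, Matrix.add_apply,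
    Matrix.smul_apply, Matrix.one_apply, Matrix.diagonal_apply, Matrix.of_apply,
    smul_eq_mul, mul_ite, ite_mul, zero_mul, mul_zero, mul_sub, mul_add, add_mul, sub_mul,
    Finset.sum_sub_distrib, Finset.sum_add_distrib, Finset.sum_ite_eq, Finset.mem_univ, if_true]
  ring

lemma per_s {V : ℕ} (W : Fin V → ℝ) (m : Fin V) (hWm : W m = 0)
    (hW0 : ∀ u, 0 ≤ W u)
    (φ : Fin V → ℝ) (lam c : ℝ) (hc : 0 ≤ c)
    (hpos : ∀ u, 0 < φ u) (hnorm : ∑ u, (φ u) ^ 2 = 1)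
    (hrow : ∀ u, φ u * ((V : ℝ) + c * W u - lam) = ∑ v, φ v) :
    0 < (V : ℝ) - lam ∧
      (φ m) ^ 2 * (∑ u, (1 / (1 + (c / ((V : ℝ) - lam)) * W u)) ^ 2) = 1 := by
  have hS : 0 < ∑ v, φ v :=
    Finset.sum_pos (fun u _ => hpos u) ⟨m, Finset.mem_univ m⟩
  have hDm : φ m * ((V : ℝ) - lam) = ∑ v, φ v := by
    have h := hrow m; rw [hWm] at h; linarith [h]
  have hVlam : 0 < (V : ℝ) - lam := by nlinarith [hpos m, hS, hDm]
  set t := c / ((V : ℝ) - lam) with ht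
  have ht0 : 0 ≤ t := div_nonneg hc hVlam.le
  have hden : ∀ u, 0 < 1 + t * W u := fun u => by nlinarith [mul_nonneg ht0 (hW0 u)]
  have hphi : ∀ u, φ u * (1 + t * W u) = φ m := by
    intro u
    have h2 : ((V : ℝ) - lam) * (1 + t * W u) = (V : ℝ) + c * W u - lam := by
      rw [ht]; field_simp; ring
    have h3 : (φ u * (1 + t * W u)) * ((V : ℝ) - lam) = φ m * ((V : ℝ) - lam) := by
      rw [hDm]; rw [← hrow u, ← h2]; ring
    exact mul_right_cancel₀ (ne_of_gt hVlam) h3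
  refine ⟨hVlam, ?_⟩
  rw [Finset.mul_sum]
  have hsq : ∀ u : Fin V, φ m ^ 2 * (1 / (1 + t * W u)) ^ 2 = φ u ^ 2 := by
    intro u
    have hne : (1 + t * W u) ≠ 0 := ne_of_gt (hden u)
    rw [← hphi u]
    field_simp
  rw [Finset.sum_congr rfl fun u _ => hsq u, hnorm]

set_option maxHeartbeats 1000000 in
/-- The ground-state amplitude `φ(m)` at the marked vertex of
`G(s) = L + (s/(1−s))W` on the complete graph (with `W m = 0` the unique smallest
eigenvalue of the diagonal `W`) is strictly increasing in `s` on `[0,1)`. -/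
theorem ground_amplitude_monotone {V : ℕ} (hV : 2 ≤ V) (W : Fin V → ℝ) (m : Fin V)
    (hWm : W m = 0) (hmin : ∀ u : Fin V, u ≠ m → 0 < W u)
    (φ : ℝ → Fin V → ℝ) (lam : ℝ → ℝ)
    (hpos : ∀ s ∈ Set.Ico (0 : ℝ) 1, ∀ u, 0 < φ s u)
    (hnorm : ∀ s ∈ Set.Ico (0 : ℝ) 1, ∑ u : Fin V, (φ s u) ^ 2 = 1)
    (hEig : ∀ s ∈ Set.Ico (0 : ℝ) 1, (cgG V W s).mulVec (φ s) = lam s • φ s) :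
    StrictMonoOn (fun s : ℝ => (φ s m) ^ 2) (Set.Ico (0 : ℝ) 1) := by
  have hW0 : ∀ u, 0 ≤ W u := by
    intro u
    by_cases h : u = m
    · simp [h, hWm]
    · exact (hmin u h).le
  have hrow : ∀ s ∈ Set.Ico (0 : ℝ) 1, ∀ u,
      φ s u * ((V : ℝ) + (s / (1 - s)) * W u - lam s) = ∑ v, φ s v := by
    intro s hs u
    have h := congrFun (hEig s hs) u
    rw [cgG_mulVec_apply] at h
    simp only [Pi.smul_apply, smul_eq_mul] at h
    linear_combination h
  intro s1 hs1 s2 hs2 h12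
  obtain ⟨hs10, hs11⟩ := hs1
  obtain ⟨hs20, hs21⟩ := hs2
  set c1 := s1 / (1 - s1) with hc1def
  set c2 := s2 / (1 - s2) with hc2def
  have hc1 : 0 ≤ c1 := div_nonneg hs10 (by linarith)
  have hc2 : 0 < c2 := div_pos (lt_of_le_of_lt hs10 h12) (by linarith)
  have hcc : c1 < c2 := by
    rw [hc1def, hc2def, div_lt_div_iff₀ (by linarith) (by linarith)]
    nlinarith
  have hpos1 := hpos s1 ⟨hs10, hs11⟩
  have hpos2 := hpos s2 ⟨hs20, hs21⟩
  obtain ⟨hV1, hF1⟩ := per_s W m hWm hW0 (φ s1) (lam s1) c1 hc1 hpos1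
    (hnorm s1 ⟨hs10, hs11⟩) (hrow s1 ⟨hs10, hs11⟩)
  obtain ⟨hV2, hF2⟩ := per_s W m hWm hW0 (φ s2) (lam s2) c2 hc2.le hpos2
    (hnorm s2 ⟨hs20, hs21⟩) (hrow s2 ⟨hs20, hs21⟩)
  -- lambda monotonicity
  set P := ∑ u, φ s1 u * φ s2 u with hPdef
  set Q := ∑ u, W u * (φ s1 u * φ s2 u) with hQdef
  have hP : 0 < P :=
    Finset.sum_pos (fun u _ => mul_pos (hpos1 u) (hpos2 u)) ⟨m, Finset.mem_univ m⟩
  obtain ⟨u0, hu0⟩ : ∃ u : Fin V, u ≠ m := by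
    have : 1 < Fintype.card (Fin V) := by simp; omega
    exact Fintype.exists_ne_of_one_lt_card this m
  have hQ : 0 < Q := by
    refine Finset.sum_pos' (fun u _ => mul_nonneg (hW0 u)
      (mul_pos (hpos1 u) (hpos2 u)).le) ⟨u0, Finset.mem_univ u0, ?_⟩
    exact mul_pos (hmin u0 hu0) (mul_pos (hpos1 u0) (hpos2 u0))
  have e1 : (V : ℝ) * P + c1 * Q - lam s1 * P = (∑ v, φ s1 v) * (∑ v, φ s2 v) := by
    have h : ∀ u : Fin V, (φ s1 u * ((V : ℝ) + c1 * W u - lam s1)) * φ s2 u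
        = (V : ℝ) * (φ s1 u * φ s2 u) + c1 * (W u * (φ s1 u * φ s2 u))
          - lam s1 * (φ s1 u * φ s2 u) := fun u => by ring
    have h2 : ∑ u, (φ s1 u * ((V : ℝ) + c1 * W u - lam s1)) * φ s2 u
        = (∑ v, φ s1 v) * (∑ v, φ s2 v) := by
      rw [Finset.sum_congr rfl fun u _ => by rw [hrow s1 ⟨hs10, hs11⟩ u], ← Finset.mul_sum]
    rw [← h2, Finset.sum_congr rfl fun u _ => h u]
    rw [Finset.sum_sub_distrib, Finset.sum_add_distrib, ← Finset.mul_sum, ← Finset.mul_sum,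
      ← Finset.mul_sum]
  have e2 : (V : ℝ) * P + c2 * Q - lam s2 * P = (∑ v, φ s1 v) * (∑ v, φ s2 v) := by
    have h : ∀ u : Fin V, (φ s2 u * ((V : ℝ) + c2 * W u - lam s2)) * φ s1 u
        = (V : ℝ) * (φ s1 u * φ s2 u) + c2 * (W u * (φ s1 u * φ s2 u))
          - lam s2 * (φ s1 u * φ s2 u) := fun u => by ring
    have h2 : ∑ u, (φ s2 u * ((V : ℝ) + c2 * W u - lam s2)) * φ s1 u
        = (∑ v, φ s1 v) * (∑ v, φ s2 v) := by
      rw [Finset.sum_congr rfl fun u _ => by rw [hrow s2 ⟨hs20, hs21⟩ u], ← Finset.mul_sum]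
      ring
    rw [← h2, Finset.sum_congr rfl fun u _ => h u]
    rw [Finset.sum_sub_distrib, Finset.sum_add_distrib, ← Finset.mul_sum, ← Finset.mul_sum,
      ← Finset.mul_sum]
  have hlam : lam s1 < lam s2 := by
    have key : (c2 - c1) * Q = (lam s2 - lam s1) * P := by linarith [e1, e2]
    nlinarith [mul_pos (sub_pos.mpr hcc) hQ, hP]
  -- t monotonicity
  set t1 := c1 / ((V : ℝ) - lam s1) with ht1def
  set t2 := c2 / ((V : ℝ) - lam s2) with ht2def
  have ht10 : 0 ≤ t1 := div_nonneg hc1 hV1.le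
  have ht12 : t1 < t2 := by
    rw [ht1def, ht2def, div_lt_div_iff₀ hV1 hV2]
    nlinarith [mul_pos hc2 (sub_pos.mpr hlam), mul_pos (sub_pos.mpr hcc) hV2]
  -- F strictly decreases
  have hden1 : ∀ u, 0 < 1 + t1 * W u := fun u => by nlinarith [mul_nonneg ht10 (hW0 u)]
  have hden2 : ∀ u, 0 < 1 + t2 * W u := fun u => by
    nlinarith [mul_nonneg (le_trans ht10 ht12.le) (hW0 u)]
  have hF : (∑ u, (1 / (1 + t2 * W u)) ^ 2) < ∑ u, (1 / (1 + t1 * W u)) ^ 2 := by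
    refine Finset.sum_lt_sum (fun u _ => ?_) ⟨u0, Finset.mem_univ u0, ?_⟩
    · have h1 : 1 + t1 * W u ≤ 1 + t2 * W u := by nlinarith [mul_nonneg (sub_pos.mpr ht12).le (hW0 u)]
      have := one_div_le_one_div_of_le (hden1 u) h1
      exact pow_le_pow_left₀ (one_div_nonneg.mpr (hden2 u).le) this 2
    · have h1 : 1 + t1 * W u0 < 1 + t2 * W u0 := by nlinarith [mul_pos (sub_pos.mpr ht12) (hmin u0 hu0)]
      have := one_div_lt_one_div_of_lt (hden1 u0) h1
      exact pow_lt_pow_left₀ this (one_div_nonneg.mpr (hden2 u0).le) (by norm_num)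
  have hFpos : 0 < ∑ u, (1 / (1 + t2 * W u)) ^ 2 :=
    Finset.sum_pos (fun u _ => pow_pos (one_div_pos.mpr (hden2 u)) 2) ⟨m, Finset.mem_univ m⟩
  -- conclude
  simp only
  nlinarith [hF1, hF2, hF, hFpos, pow_pos (hpos2 m) 2, pow_pos (hpos1 m) 2]
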